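/- arXiv:1911.07409 — 2 statements merged into one kernel-verified Lean document; each statement's English description precedes it below -/
import Mathlib

section
/- Let E be a real inner product space, let κ ⊆ E be a nonempty convex set of diameter at most D > 0, and let G > 0. Let T ≥ 1 be a natural number and let f₁, …, f_T : E → ℝ be convex functions, each differentiable on κ with gradient norm at most G at every point of κ. Set η = D/(G·√T). Suppose Λ₁ ∈ κ and, for each t = 1, …, T−1, Λ_{t+1} is a nearest point of κ to Λ_t − η·∇f_t(Λ_t) (i.e. Λ_{t+1} ∈ κ and ‖Λ_{t+1} − (Λ_t − η∇f_t(Λ_t))‖ ≤ ‖s − (Λ_t − η∇f_t(Λ_t))‖ for all s ∈ κ). Then for every Λ* ∈ κ, the regret satisfies ∑_{t=1}^{T} (f_t(Λ_t) − f_t(Λ*)) ≤ G·D·√T. -/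
open scoped RealInnerProductSpace

lemma ogd_convex_grad_ineq {E : Type*} [NormedAddCommGroup E] [InnerProductSpace ℝ E]
    {f : E → ℝ} (hf : ConvexOn ℝ Set.univ f) {x : E} {g : E}
    (hd : HasFDerivAt f (innerSL ℝ g) x) (y : E) :
    f x - f y ≤ ⟪g, x - y⟫ := by
  set φ : ℝ → ℝ := fun s => f (x + s • (y - x)) with hφdef
  have hline : HasDerivAt (fun s : ℝ => x + s • (y - x)) (y - x) 0 := by
    simpa using ((hasDerivAt_id (0:ℝ)).smul_const (y - x)).const_add x
  have hd' : HasFDerivAt f (innerSL ℝ g) (x + (0:ℝ) • (y - x)) := by simpa using hd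
  have hd0 : HasDerivAt φ (⟪g, y - x⟫) 0 := by
    have h := hd'.comp_hasDerivAt 0 hline
    simp only [innerSL_apply_apply] at h
    exact h
  have key : ∀ s : ℝ, s ∈ Set.Ioc (0:ℝ) 1 → slope φ 0 s ≤ f y - f x := by
    intro s hs
    have h := hf.2 (Set.mem_univ x) (Set.mem_univ y)
      (show (0:ℝ) ≤ 1 - s by linarith [hs.2]) (show (0:ℝ) ≤ s from hs.1.le)
      (show (1 - s) + s = 1 by ring)
    have hxy : (1 - s) • x + s • y = x + s • (y - x) := by
      rw [sub_smul, smul_sub]; module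
    rw [hxy] at h
    have hφ0 : φ 0 = f x := by simp [hφdef]
    have hφs : φ s ≤ (1 - s) * f x + s * f y := by simpa [hφdef] using h
    have hsl : slope φ 0 s = (φ s - φ 0) / s := by simp [slope_def_field]
    rw [hsl, div_le_iff₀ hs.1]
    nlinarith [hφs, hφ0]
  have hten : Filter.Tendsto (slope φ 0) (nhdsWithin (0:ℝ) (Set.Ioi 0))
      (nhds (⟪g, y - x⟫)) :=
    (hasDerivAt_iff_tendsto_slope.1 hd0).mono_left
      (nhdsWithin_mono _ fun z hz => Set.mem_compl_singleton_iff.2 (ne_of_gt hz))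
  have hle : ⟪g, y - x⟫ ≤ f y - f x :=
    le_of_tendsto hten (Filter.eventually_of_mem (Ioc_mem_nhdsGT one_pos) key)
  have e1 : ⟪g, x - y⟫ = ⟪g, x⟫ - ⟪g, y⟫ := inner_sub_right _ _ _
  have e2 : ⟪g, y - x⟫ = ⟪g, y⟫ - ⟪g, x⟫ := inner_sub_right _ _ _
  linarith

set_option maxHeartbeats 1000000 in
/-- Online projected gradient descent regret bound (Theorem 3.1, OGD part):
over a nonempty convex set `κ` of diameter at most `D`, with convex losses
`f 1, …, f T` whose gradients (expressed via `g`) are bounded in norm by `G`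
on `κ`, the iterates produced with step size `η = D / (G * √T)` and
nearest-point projection onto `κ` satisfy
`∑_{t=1}^{T} (f t (Λ t) - f t Λ*) ≤ G * D * √T` for every `Λ* ∈ κ`. -/
theorem online_gradient_descent_regret
    {E : Type*} [NormedAddCommGroup E] [InnerProductSpace ℝ E]
    (κ : Set E) (hκne : κ.Nonempty) (hκconv : Convex ℝ κ)
    (D G : ℝ) (hD : 0 < D) (hG : 0 < G)
    (hdiam : ∀ x ∈ κ, ∀ y ∈ κ, ‖x - y‖ ≤ D)
    (T : ℕ) (hT : 1 ≤ T)
    (f : ℕ → E → ℝ) (g : ℕ → E → E)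
    (hconv : ∀ t ∈ Finset.Icc 1 T, ConvexOn ℝ Set.univ (f t))
    (hgrad : ∀ t ∈ Finset.Icc 1 T, ∀ x ∈ κ, HasFDerivAt (f t) (innerSL ℝ (g t x)) x)
    (hGbound : ∀ t ∈ Finset.Icc 1 T, ∀ x ∈ κ, ‖g t x‖ ≤ G)
    (η : ℝ) (hη : η = D / (G * Real.sqrt T))
    (Λ : ℕ → E) (hΛ1 : Λ 1 ∈ κ)
    (hstep : ∀ t : ℕ, 1 ≤ t → t + 1 ≤ T →
      Λ (t + 1) ∈ κ ∧
      ∀ s ∈ κ, ‖Λ (t + 1) - (Λ t - η • g t (Λ t))‖ ≤ ‖s - (Λ t - η • g t (Λ t))‖)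
    (Λstar : E) (hΛstar : Λstar ∈ κ) :
    ∑ t ∈ Finset.Icc 1 T, (f t (Λ t) - f t Λstar) ≤ G * D * Real.sqrt T := by
  haveI : Nonempty κ := ⟨⟨Λstar, hΛstar⟩⟩
  have hTpos : (0:ℝ) < T := by exact_mod_cast Nat.lt_of_lt_of_le Nat.zero_lt_one hT
  have hsT : 0 < Real.sqrt T := Real.sqrt_pos.2 hTpos
  have hηpos : 0 < η := by rw [hη]; positivity
  have hmem : ∀ t, 1 ≤ t → t ≤ T → Λ t ∈ κ := by
    intro t ht1
    induction t, ht1 using Nat.le_induction with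
    | base => intro _; exact hΛ1
    | succ n hn ih => intro h; exact (hstep n hn h).1
  set b : ℕ → ℝ := fun t => if t ≤ T then ‖Λ t - Λstar‖^2 else 0 with hb
  have main : ∀ t ∈ Finset.Icc 1 T,
      2*η*(f t (Λ t) - f t Λstar) ≤ (b t - b (t+1)) + η^2*G^2 := by
    intro t ht'
    have ht := Finset.mem_Icc.1 ht'
    have hΛt : Λ t ∈ κ := hmem t ht.1 ht.2
    have hcg : f t (Λ t) - f t Λstar ≤ ⟪g t (Λ t), Λ t - Λstar⟫ :=
      ogd_convex_grad_ineq (hconv t ht') (hgrad t ht' _ hΛt) Λstar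
    have hgb : ‖g t (Λ t)‖ ≤ G := hGbound t ht' _ hΛt
    have hbt : b t = ‖Λ t - Λstar‖^2 := by simp only [hb]; rw [if_pos ht.2]
    rcases eq_or_lt_of_le ht.2 with hTeq | hlt
    · -- last step: t = T
      have hbt1 : b (t+1) = 0 := by simp only [hb]; rw [if_neg (by omega)]
      have hCS : ⟪g t (Λ t), Λ t - Λstar⟫ ≤ G * ‖Λ t - Λstar‖ :=
        le_trans (real_inner_le_norm _ _)
          (mul_le_mul_of_nonneg_right hgb (norm_nonneg _))
      rw [hbt, hbt1]
      nlinarith [sq_nonneg (‖Λ t - Λstar‖ - η*G), hηpos, hcg, hCS]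
    · -- projection step
      have ht1T : t + 1 ≤ T := hlt
      obtain ⟨hPmem, hP⟩ := hstep t ht.1 ht1T
      set y : E := Λ t - η • g t (Λ t) with hy
      have hbt1 : b (t+1) = ‖Λ (t+1) - Λstar‖^2 := by simp only [hb]; rw [if_pos ht1T]
      have hinf : ‖y - Λ (t+1)‖ = ⨅ w : κ, ‖y - w‖ := by
        apply le_antisymm
        · apply le_ciInf
          intro w
          calc ‖y - Λ (t+1)‖ = ‖Λ (t+1) - y‖ := norm_sub_rev _ _
            _ ≤ ‖(w:E) - y‖ := hP w w.2
            _ = ‖y - w‖ := norm_sub_rev _ _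
        · have hbdd : BddBelow (Set.range fun w : κ => ‖y - (w:E)‖) := by
            refine ⟨0, ?_⟩
            rintro r ⟨w, rfl⟩
            exact norm_nonneg _
          exact ciInf_le hbdd ⟨Λ (t+1), hPmem⟩
      have hvar : ⟪y - Λ (t+1), Λstar - Λ (t+1)⟫ ≤ 0 :=
        (norm_eq_iInf_iff_real_inner_le_zero hκconv hPmem).1 hinf Λstar hΛstar
      have hexp1 : ‖y - Λstar‖^2
          = ‖y - Λ (t+1)‖^2 - 2*⟪y - Λ (t+1), Λstar - Λ (t+1)⟫ + ‖Λstar - Λ (t+1)‖^2 := by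
        have h := norm_sub_sq_real (y - Λ (t+1)) (Λstar - Λ (t+1))
        rw [sub_sub_sub_cancel_right] at h
        linarith
      have hxx : ‖Λstar - Λ (t+1)‖ = ‖Λ (t+1) - Λstar‖ := norm_sub_rev _ _
      have hproj : ‖Λ (t+1) - Λstar‖^2 ≤ ‖y - Λstar‖^2 := by
        rw [hexp1, hxx]
        nlinarith [sq_nonneg ‖y - Λ (t+1)‖, hvar]
      have hexp2 : ‖y - Λstar‖^2
          = ‖Λ t - Λstar‖^2 - 2*η*⟪g t (Λ t), Λ t - Λstar⟫ + η^2*‖g t (Λ t)‖^2 := by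
        have hyy : y - Λstar = (Λ t - Λstar) - η • g t (Λ t) := by rw [hy]; abel
        rw [hyy, norm_sub_sq_real, real_inner_smul_right, norm_smul,
          real_inner_comm, mul_pow]
        rw [Real.norm_eq_abs, abs_of_pos hηpos]
        ring
      have hg2 : η^2*‖g t (Λ t)‖^2 ≤ η^2*G^2 := by
        have := pow_le_pow_left₀ (norm_nonneg _) hgb 2
        nlinarith [sq_nonneg η]
      rw [hbt, hbt1]
      nlinarith [hcg, hηpos, hproj, hexp2, hg2]
  -- telescoping sum
  have htel : ∑ t ∈ Finset.Icc 1 T, (b t - b (t+1)) = b 1 - b (T+1) := by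
    have h1 : ∑ t ∈ Finset.Icc 1 T, (b t - b (t+1))
        = ∑ i ∈ Finset.range T, ((fun i => b (i+1)) i - (fun i => b (i+1)) (i+1)) := by
      rw [← Finset.Ico_add_one_right_eq_Icc, Finset.sum_Ico_eq_sum_range]
      simp only [Nat.succ_sub_one]
      exact Finset.sum_congr rfl fun i _ => by rw [Nat.add_comm 1 i]
    rw [h1, Finset.sum_range_sub' (fun i => b (i+1))]
  have hsum : 2*η*(∑ t ∈ Finset.Icc 1 T, (f t (Λ t) - f t Λstar))
      ≤ (b 1 - b (T+1)) + (T:ℝ)*(η^2*G^2) := by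
    rw [Finset.mul_sum]
    calc ∑ t ∈ Finset.Icc 1 T, 2*η*(f t (Λ t) - f t Λstar)
        ≤ ∑ t ∈ Finset.Icc 1 T, ((b t - b (t+1)) + η^2*G^2) := Finset.sum_le_sum main
      _ = (b 1 - b (T+1)) + (T:ℝ)*(η^2*G^2) := by
          rw [Finset.sum_add_distrib, htel, Finset.sum_const, Nat.card_Icc]
          simp [nsmul_eq_mul]
  have hb1 : b 1 ≤ D^2 := by
    have : b 1 = ‖Λ 1 - Λstar‖^2 := by simp only [hb]; rw [if_pos hT]
    rw [this]
    have := hdiam _ hΛ1 _ hΛstar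
    nlinarith [norm_nonneg (Λ 1 - Λstar)]
  have hbT1 : b (T+1) = 0 := by simp only [hb]; rw [if_neg (by omega)]
  have hTη : (T:ℝ)*(η^2*G^2) = D^2 := by
    rw [hη, div_pow, mul_pow, Real.sq_sqrt hTpos.le]
    field_simp
  have hfin : 2*η*(G*D*Real.sqrt T) = 2*D^2 := by
    rw [hη]
    field_simp
  have : 2*η*(∑ t ∈ Finset.Icc 1 T, (f t (Λ t) - f t Λstar)) ≤ 2*η*(G*D*Real.sqrt T) := by
    rw [hfin]; rw [hbT1] at hsum; linarith [hsum, hb1, hTη]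
  exact le_of_mul_le_mul_left this (by positivity)
end

section
/- Let m ≥ 1, let t₁ ≤ t₂ be reals, let v > 0, and for each s ∈ {1, …, m} let λ_s : [t₁, t₂] → ℝ be continuous with λ_s(t) > 0 for all t, and suppose max_{t ∈ [t₁,t₂]} λ_s(t) − min_{t ∈ [t₁,t₂]} λ_s(t) ≤ v for every s. Set y = ∑_{s=1}^m min_t λ_s(t) and Y = ∑_{s=1}^m max_t λ_s(t). Then for every j ∈ {1, …, m}, writing U(j) = (max_t λ_j(t))/y and L(j) = (min_t λ_j(t))/Y, the gap δ(j) = U(j) − L(j) satisfies δ(j) ≤ (m·v² + (y + m·min_t λ_j(t))·v) / (y² + m·v·y). -/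
/-- Theorem 4.4 (confidence-gap bound): if each rate function has oscillation at
most `v` on `[t₁, t₂]`, then with `y = ∑_s min λ_s` and `Y = ∑_s max λ_s`, the
gap `δ(j) = U(j) − L(j) = (max λ_j)/y − (min λ_j)/Y` satisfies
`δ(j) ≤ (m·v² + (y + m·min λ_j)·v) / (y² + m·v·y)`. -/
theorem confidence_gap_bound
    (m : ℕ) (hm : 1 ≤ m) (t₁ t₂ : ℝ) (ht : t₁ ≤ t₂) (v : ℝ) (hv : 0 < v)
    (lam : Fin m → ℝ → ℝ)
    (hcont : ∀ s, ContinuousOn (lam s) (Set.Icc t₁ t₂))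
    (hpos : ∀ s, ∀ t ∈ Set.Icc t₁ t₂, 0 < lam s t)
    (hosc : ∀ s, sSup (lam s '' Set.Icc t₁ t₂) - sInf (lam s '' Set.Icc t₁ t₂) ≤ v) :
    ∀ j : Fin m,
      sSup (lam j '' Set.Icc t₁ t₂) / (∑ s, sInf (lam s '' Set.Icc t₁ t₂)) -
        sInf (lam j '' Set.Icc t₁ t₂) / (∑ s, sSup (lam s '' Set.Icc t₁ t₂)) ≤
      (m * v ^ 2 + ((∑ s, sInf (lam s '' Set.Icc t₁ t₂)) + m * sInf (lam j '' Set.Icc t₁ t₂)) * v) /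
        ((∑ s, sInf (lam s '' Set.Icc t₁ t₂)) ^ 2 + m * v * (∑ s, sInf (lam s '' Set.Icc t₁ t₂))) := by
  intro j
  have hKne : (Set.Icc t₁ t₂).Nonempty := Set.nonempty_Icc.2 ht
  have himg : ∀ s : Fin m, IsCompact (lam s '' Set.Icc t₁ t₂) :=
    fun s => isCompact_Icc.image_of_continuousOn (hcont s)
  have himgne : ∀ s : Fin m, (lam s '' Set.Icc t₁ t₂).Nonempty := fun s => hKne.image _
  set mi := fun s : Fin m => sInf (lam s '' Set.Icc t₁ t₂) with hmi
  set Ma := fun s : Fin m => sSup (lam s '' Set.Icc t₁ t₂) with hMa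
  have hmipos : ∀ s, 0 < mi s := by
    intro s
    obtain ⟨t, ht', he⟩ := (himg s).sInf_mem (himgne s)
    simp only [hmi]; exact he ▸ hpos s t ht'
  have hle : ∀ s, mi s ≤ Ma s := fun s =>
    csInf_le_csSup (himgne s) (himg s).bddBelow (himg s).bddAbove
  have hMle : ∀ s, Ma s ≤ mi s + v := fun s => by have := hosc s; show sSup _ ≤ sInf _ + v; linarith
  set y := ∑ s, mi s with hy
  set Y := ∑ s, Ma s with hY
  have hne : (Finset.univ : Finset (Fin m)).Nonempty := Finset.univ_nonempty_iff.2 (Fin.pos_iff_nonempty.mp (by omega))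
  have hypos : 0 < y := Finset.sum_pos (fun s _ => hmipos s) hne
  have hYy : y ≤ Y := Finset.sum_le_sum fun s _ => hle s
  have hYle : Y ≤ y + m * v := by
    calc Y ≤ ∑ _s : Fin m, (mi _s + v) := Finset.sum_le_sum fun s _ => hMle s
    _ = y + m * v := by rw [Finset.sum_add_distrib]; simp [hy, mul_comm]
  have hYpos : 0 < Y := lt_of_lt_of_le hypos hYy
  have h1 : Ma j / y ≤ (mi j + v) / y := by gcongr; exact hMle j
  have h2 : mi j / (y + m * v) ≤ mi j / Y := by
    gcongr
    · exact (hmipos j).le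
  have key : (mi j + v) / y - mi j / (y + m * v) =
      (m * v ^ 2 + (y + m * mi j) * v) / (y ^ 2 + m * v * y) := by
    have h0 : y ≠ 0 := ne_of_gt hypos
    have h0' : y + m * v ≠ 0 := by positivity
    field_simp
    ring
  linarith [h1, h2, key]
end
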